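/- Let α > 0, X₀ > 0, r ∈ ℝ, μ > r, and let T ≥ 2 be an integer. For σ > 0 and t ∈ ℕ define A_t(σ) := (α σ/(μ − r))·X₀ e^{rT} + ((μ − r)(t+1) − 1)/σ. Then: (i) if μ − r > 1, lim_{σ → 0⁺} ∏_{t=0}^{T−2} Φ(A_t(σ)/√(t+1)) = 1; and (ii) if μ − r < 1/(T−1), lim_{σ → 0⁺} ∏_{t=0}^{T−2} Φ(A_t(σ)/√(t+1)) = 0, where Φ is the standard normal cumulative distribution function. -/

import Mathlib

open MeasureTheory ProbabilityTheory Filter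

/-- The standard normal cumulative distribution function. -/
noncomputable def stdNormalCDF (d : ℝ) : ℝ :=
  ((gaussianReal 0 1) (Set.Iic d)).toReal

lemma stdNormalCDF_eq_cdf (d : ℝ) : stdNormalCDF d = ProbabilityTheory.cdf (gaussianReal 0 1) d :=
  (cdf_eq_real _ _).symm

lemma stdNormalCDF_nonneg (d : ℝ) : 0 ≤ stdNormalCDF d := by
  rw [stdNormalCDF_eq_cdf]; exact cdf_nonneg _ _

lemma stdNormalCDF_le_one (d : ℝ) : stdNormalCDF d ≤ 1 := by
  rw [stdNormalCDF_eq_cdf]; exact cdf_le_one _ _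

lemma tendsto_stdNormalCDF_atTop : Tendsto stdNormalCDF atTop (nhds 1) :=
  (tendsto_cdf_atTop (gaussianReal 0 1)).congr fun x => (stdNormalCDF_eq_cdf x).symm

lemma tendsto_stdNormalCDF_atBot : Tendsto stdNormalCDF atBot (nhds 0) :=
  (tendsto_cdf_atBot (gaussianReal 0 1)).congr fun x => (stdNormalCDF_eq_cdf x).symm

/-- As the volatility `σ` tends to `0` from above, the product
`∏_{t=0}^{T-2} Φ(A_t(σ)/√(t+1))`, with
`A_t(σ) = (ασ/(μ-r))X₀e^{rT} + ((μ-r)(t+1) - 1)/σ`, tends to `1` when `μ - r > 1` and to `0`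
when `μ - r < 1/(T-1)`. -/
theorem stmt_19 (α X₀ r μ : ℝ) (hα : 0 < α) (hX₀ : 0 < X₀) (hμ : r < μ)
    (T : ℕ) (hT : 2 ≤ T)
    (A : ℝ → ℕ → ℝ)
    (hA : ∀ σ : ℝ, ∀ t : ℕ,
      A σ t = α * σ / (μ - r) * (X₀ * Real.exp (r * T)) + ((μ - r) * (t + 1) - 1) / σ) :
    ((1 : ℝ) < μ - r →
      Tendsto
        (fun σ : ℝ => ∏ t ∈ Finset.range (T - 1),
          stdNormalCDF (A σ t / Real.sqrt (t + 1)))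
        (nhdsWithin 0 (Set.Ioi 0)) (nhds 1))
    ∧ (μ - r < 1 / ((T : ℝ) - 1) →
      Tendsto
        (fun σ : ℝ => ∏ t ∈ Finset.range (T - 1),
          stdNormalCDF (A σ t / Real.sqrt (t + 1)))
        (nhdsWithin 0 (Set.Ioi 0)) (nhds 0)) := by
  have hμr : 0 < μ - r := sub_pos.mpr hμ
  -- the bounded first summand tends to 0
  have hconst : Tendsto (fun σ : ℝ => α * σ / (μ - r) * (X₀ * Real.exp (r * T)))
      (nhdsWithin 0 (Set.Ioi 0)) (nhds 0) := by
    have h : Continuous (fun σ : ℝ => α * σ / (μ - r) * (X₀ * Real.exp (r * T))) := by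
      continuity
    simpa using (h.tendsto 0).mono_left nhdsWithin_le_nhds
  have hsqrt : ∀ t : ℕ, 0 < Real.sqrt ((t : ℝ) + 1) := fun t =>
    Real.sqrt_pos.mpr (by positivity)
  have hatTop : ∀ t : ℕ, 0 < (μ - r) * ((t : ℝ) + 1) - 1 →
      Tendsto (fun σ : ℝ => A σ t / Real.sqrt ((t : ℝ) + 1))
        (nhdsWithin 0 (Set.Ioi 0)) atTop := by
    intro t ht
    have h1 : Tendsto (fun σ : ℝ => ((μ - r) * ((t : ℝ) + 1) - 1) / σ)
        (nhdsWithin 0 (Set.Ioi 0)) atTop := by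
      simpa [div_eq_mul_inv] using tendsto_inv_nhdsGT_zero.const_mul_atTop ht
    have h2 : Tendsto (fun σ : ℝ => A σ t) (nhdsWithin 0 (Set.Ioi 0)) atTop := by
      refine (hconst.add_atTop h1).congr fun σ => ?_
      rw [hA σ t]
    exact h2.atTop_div_const (hsqrt t)
  have hatBot : ∀ t : ℕ, (μ - r) * ((t : ℝ) + 1) - 1 < 0 →
      Tendsto (fun σ : ℝ => A σ t / Real.sqrt ((t : ℝ) + 1))
        (nhdsWithin 0 (Set.Ioi 0)) atBot := by
    intro t ht
    have h1 : Tendsto (fun σ : ℝ => ((μ - r) * ((t : ℝ) + 1) - 1) / σ)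
        (nhdsWithin 0 (Set.Ioi 0)) atBot := by
      simpa [div_eq_mul_inv] using tendsto_inv_nhdsGT_zero.const_mul_atTop_of_neg ht
    have h2 : Tendsto (fun σ : ℝ => A σ t) (nhdsWithin 0 (Set.Ioi 0)) atBot := by
      refine (hconst.add_atBot h1).congr fun σ => ?_
      rw [hA σ t]
    exact h2.atBot_div_const (hsqrt t)
  constructor
  · -- case μ - r > 1 : every factor tends to 1
    intro hone
    have h : Tendsto
        (fun σ : ℝ => ∏ t ∈ Finset.range (T - 1),
          stdNormalCDF (A σ t / Real.sqrt (t + 1)))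
        (nhdsWithin 0 (Set.Ioi 0))
        (nhds (∏ _t ∈ Finset.range (T - 1), (1 : ℝ))) := by
      refine tendsto_finset_prod _ fun t _ => ?_
      have hpos : 0 < (μ - r) * ((t : ℝ) + 1) - 1 := by
        have h1 : (1 : ℝ) ≤ (t : ℝ) + 1 := by linarith [Nat.cast_nonneg (α := ℝ) t]
        nlinarith
      exact tendsto_stdNormalCDF_atTop.comp (hatTop t hpos)
    simpa using h
  · -- case μ - r < 1/(T-1) : last factor tends to 0, product is squeezed
    intro hsmall
    have hT1 : (1 : ℝ) ≤ (T : ℝ) - 1 := by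
      have : (2 : ℝ) ≤ (T : ℝ) := by exact_mod_cast hT
      linarith
    set t₀ : ℕ := T - 2 with ht₀
    have hcast : ((t₀ : ℝ) + 1) = (T : ℝ) - 1 := by
      have : ((t₀ : ℕ) : ℝ) = (T : ℝ) - 2 := by
        rw [ht₀]
        push_cast [Nat.cast_sub hT]
        ring
      rw [this]; ring
    have hneg : (μ - r) * ((t₀ : ℝ) + 1) - 1 < 0 := by
      rw [hcast]
      have hTpos : 0 < (T : ℝ) - 1 := by linarith
      have := (lt_div_iff₀ hTpos).mp hsmall
      linarith
    have hmem : t₀ ∈ Finset.range (T - 1) := by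
      rw [Finset.mem_range, ht₀]
      omega
    have hg : Tendsto (fun σ : ℝ => stdNormalCDF (A σ t₀ / Real.sqrt ((t₀ : ℝ) + 1)))
        (nhdsWithin 0 (Set.Ioi 0)) (nhds 0) :=
      tendsto_stdNormalCDF_atBot.comp (hatBot t₀ hneg)
    refine squeeze_zero (fun σ => Finset.prod_nonneg fun t _ => stdNormalCDF_nonneg _)
      (fun σ => ?_) hg
    calc (∏ t ∈ Finset.range (T - 1), stdNormalCDF (A σ t / Real.sqrt (t + 1)))
        = stdNormalCDF (A σ t₀ / Real.sqrt ((t₀ : ℝ) + 1)) *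
          ∏ t ∈ (Finset.range (T - 1)).erase t₀,
            stdNormalCDF (A σ t / Real.sqrt (t + 1)) :=
          (Finset.mul_prod_erase _ _ hmem).symm
      _ ≤ stdNormalCDF (A σ t₀ / Real.sqrt ((t₀ : ℝ) + 1)) * 1 := by
          apply mul_le_mul_of_nonneg_left _ (stdNormalCDF_nonneg _)
          exact Finset.prod_le_one (fun t _ => stdNormalCDF_nonneg _)
            (fun t _ => stdNormalCDF_le_one _)
      _ = stdNormalCDF (A σ t₀ / Real.sqrt ((t₀ : ℝ) + 1)) := mul_one _
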